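/- arXiv:2411.14766 — 3 statements merged into one kernel-verified Lean document; each statement's English description precedes it below -/
import Mathlib

section
/- Let 0 < α < 1 and for each real x ≥ 1 define S(x) = ∑_{k=0}^{∞} ∏_{m=0}^{k} (1 - 1/(2(x+m)^α)). Then S(x) is finite for every x ≥ 1, and x^{-α} S(x) → 2 as x → ∞. -/
open Finset Real Filter

private lemma pm_bounds {α x : ℝ} (hα0 : 0 < α) (hx : 1 ≤ x) (m : ℕ) :
    0 < 1 / (2 * (x + m) ^ α) ∧ 1 / (2 * (x + m) ^ α) ≤ 1 / 2 := by
  have h1 : (1 : ℝ) ≤ x + m := by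
    have : (0:ℝ) ≤ m := Nat.cast_nonneg m
    linarith
  have h2 : (1 : ℝ) ≤ (x + m) ^ α := Real.one_le_rpow h1 hα0.le
  constructor
  · positivity
  · rw [div_le_div_iff₀ (by linarith) (by norm_num)]
    linarith

private lemma pm_mono {α x : ℝ} (hα0 : 0 < α) (hx : 1 ≤ x) {m n : ℕ} (h : m ≤ n) :
    1 / (2 * (x + n) ^ α) ≤ 1 / (2 * (x + m) ^ α) := by
  have h1 : (1 : ℝ) ≤ x + m := by
    have : (0:ℝ) ≤ m := Nat.cast_nonneg m
    linarith
  have h2 : (x + m) ^ α ≤ (x + n) ^ α := by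
    apply Real.rpow_le_rpow (by linarith) _ hα0.le
    have : (m:ℝ) ≤ n := Nat.cast_le.mpr h
    linarith
  have h3 : (1:ℝ) ≤ (x + m) ^ α := Real.one_le_rpow h1 hα0.le
  apply one_div_le_one_div_of_le (by linarith)
  linarith

private lemma prod_le_pow {α x : ℝ} (hα0 : 0 < α) (hx : 1 ≤ x) (k K : ℕ) (hkK : k ≤ K) :
    ∏ m ∈ Finset.range (k + 1), (1 - 1 / (2 * (x + m) ^ α))
      ≤ (1 - 1 / (2 * (x + K) ^ α)) ^ (k + 1) := by
  calc ∏ m ∈ Finset.range (k + 1), (1 - 1 / (2 * (x + m) ^ α))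
      ≤ ∏ _m ∈ Finset.range (k + 1), (1 - 1 / (2 * (x + K) ^ α)) := by
        apply Finset.prod_le_prod
        · intro m _
          linarith [(pm_bounds hα0 hx m).2]
        · intro m hm
          have hm' : m ≤ K := le_trans (Nat.lt_succ_iff.mp (Finset.mem_range.mp hm)) hkK
          linarith [pm_mono hα0 hx hm']
    _ = (1 - 1 / (2 * (x + K) ^ α)) ^ (k + 1) := by
        rw [Finset.prod_const, Finset.card_range]

private lemma prod_nonneg' {α x : ℝ} (hα0 : 0 < α) (hx : 1 ≤ x) (k : ℕ) :
    0 ≤ ∏ m ∈ Finset.range (k + 1), (1 - 1 / (2 * (x + m) ^ α)) := by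
  apply Finset.prod_nonneg
  intro m _
  linarith [(pm_bounds hα0 hx m).2]

private lemma key_exp_bound {α x c : ℝ} (hα0 : 0 < α) (hα1 : α < 1) (hx : 1 ≤ x)
    (hc : 0 < c) {k : ℕ} (hk : 1 ≤ k) (hxk : x ≤ c * k) :
    ∏ m ∈ Finset.range (k + 1), (1 - 1 / (2 * (x + m) ^ α))
      ≤ Real.exp (-(1 / (2 * (c + 1)) * (k : ℝ) ^ (1 - α))) := by
  have hk' : (1:ℝ) ≤ (k:ℝ) := by exact_mod_cast hk
  have hkpos : (0:ℝ) < (k:ℝ) := by linarith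
  set p : ℝ := 1 / (2 * (x + k) ^ α) with hp
  obtain ⟨hp0, hp2⟩ := pm_bounds hα0 hx k
  have hka : (0:ℝ) < (k:ℝ) ^ α := Real.rpow_pos_of_pos hkpos α
  have hxka : (0:ℝ) < (x + k) ^ α := Real.rpow_pos_of_pos (by linarith) α
  -- (x+k)^α ≤ (c+1) * k^α
  have hden : (x + (k:ℝ)) ^ α ≤ (c + 1) * (k:ℝ) ^ α := by
    have h1 : (x + (k:ℝ)) ^ α ≤ ((c + 1) * (k:ℝ)) ^ α := by
      apply Real.rpow_le_rpow (by linarith) (by linarith) hα0.le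
    have h2 : ((c + 1) * (k:ℝ)) ^ α = (c+1) ^ α * (k:ℝ) ^ α :=
      Real.mul_rpow (by linarith) hkpos.le
    have h3 : (c+1) ^ α ≤ c + 1 := by
      calc (c+1) ^ α ≤ (c+1) ^ (1:ℝ) :=
            Real.rpow_le_rpow_of_exponent_le (by linarith) (by linarith)
        _ = c + 1 := Real.rpow_one _
    calc (x + (k:ℝ)) ^ α ≤ (c+1) ^ α * (k:ℝ) ^ α := by rw [← h2]; exact h1
      _ ≤ (c + 1) * (k:ℝ) ^ α := by
          apply mul_le_mul_of_nonneg_right h3 hka.le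
  -- k^(1-α) = k / k^α
  have hpow : (k:ℝ) ^ (1 - α) = (k:ℝ) / (k:ℝ) ^ α := by
    rw [Real.rpow_sub hkpos, Real.rpow_one]
  -- main exponent inequality
  have hexp : 1 / (2 * (c + 1)) * (k : ℝ) ^ (1 - α) ≤ ((k:ℕ) + 1 : ℝ) * p := by
    have e1 : 1 / (2 * (c + 1)) * (k : ℝ) ^ (1 - α) = (k:ℝ) / (2 * ((c+1) * (k:ℝ)^α)) := by
      rw [hpow, div_mul_div_comm, one_mul, mul_assoc]
    have e2 : (k:ℝ) / (2 * ((c+1) * (k:ℝ)^α)) ≤ (k:ℝ) / (2 * (x + (k:ℝ))^α) := by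
      apply div_le_div_of_nonneg_left hkpos.le (by positivity)
      nlinarith
    have e3 : (k:ℝ) / (2 * (x + (k:ℝ))^α) ≤ ((k:ℝ) + 1) * p := by
      rw [hp, mul_one_div]
      gcongr
      linarith
    rw [e1]
    push_cast
    linarith [e2.trans e3]
  calc ∏ m ∈ Finset.range (k + 1), (1 - 1 / (2 * (x + m) ^ α))
      ≤ (1 - p) ^ (k + 1) := prod_le_pow hα0 hx k k le_rfl
    _ ≤ Real.exp (-p) ^ (k + 1) := by
        apply pow_le_pow_left₀ (by linarith) _
        linarith [Real.add_one_le_exp (-p)]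
    _ = Real.exp (((k:ℕ) + 1 : ℝ) * (-p)) := by
        rw [← Real.exp_nat_mul]
        push_cast
        try ring_nf
    _ ≤ Real.exp (-(1 / (2 * (c + 1)) * (k : ℝ) ^ (1 - α))) := by
        apply Real.exp_le_exp.mpr
        have hpnn : 0 ≤ p := hp0.le
        nlinarith [hexp]

private lemma expSummable {c γ : ℝ} (hc : 0 < c) (hγ : 0 < γ) :
    Summable fun k : ℕ => Real.exp (-(c * (k : ℝ) ^ γ)) := by
  have h1 : (fun y : ℝ => Real.exp (-c * y)) =o[atTop] fun y : ℝ => y ^ (-2 / γ) :=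
    isLittleO_exp_neg_mul_rpow_atTop hc _
  have h2 : Tendsto (fun k : ℕ => (k : ℝ) ^ γ) atTop atTop :=
    (tendsto_rpow_atTop hγ).comp tendsto_natCast_atTop_atTop
  have h3 := h1.comp_tendsto h2
  have h4 : (fun k : ℕ => Real.exp (-(c * (k : ℝ) ^ γ))) =O[atTop]
      fun k : ℕ => (k : ℝ) ^ (-2 : ℝ) := by
    have heq1 : ∀ k : ℕ, ((fun y : ℝ => Real.exp (-c * y)) ∘ fun k : ℕ => (k : ℝ) ^ γ) k
        = Real.exp (-(c * (k : ℝ) ^ γ)) := by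
      intro k; simp [Function.comp, neg_mul]
    have heq2 : ∀ k : ℕ, ((fun y : ℝ => y ^ (-2 / γ)) ∘ fun k : ℕ => (k : ℝ) ^ γ) k
        = (k : ℝ) ^ (-2 : ℝ) := by
      intro k
      simp only [Function.comp]
      rw [← Real.rpow_mul (Nat.cast_nonneg k)]
      congr 1
      field_simp
    exact (h3.isBigO).congr heq1 heq2
  exact summable_of_isBigO_nat (Real.summable_nat_rpow.mpr (by norm_num)) h4

private lemma summable_prod {α : ℝ} (hα0 : 0 < α) (hα1 : α < 1) {x : ℝ} (hx : 1 ≤ x) :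
    Summable fun k : ℕ => ∏ m ∈ Finset.range (k + 1), (1 - 1 / (2 * (x + m) ^ α)) := by
  have hg : Summable fun k : ℕ => Real.exp (-(1 / (2 * ((1:ℝ) + 1)) * (k:ℝ) ^ (1 - α))) :=
    expSummable (by norm_num) (by linarith)
  apply summable_of_isBigO_nat hg
  rw [Asymptotics.isBigO_iff]
  refine ⟨1, ?_⟩
  filter_upwards [eventually_ge_atTop (⌈x⌉₊ + 1)] with k hk
  have hk1 : 1 ≤ k := le_trans (Nat.le_add_left 1 ⌈x⌉₊) hk
  have hxk : x ≤ 1 * (k:ℝ) := by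
    rw [one_mul]
    calc x ≤ (⌈x⌉₊ : ℝ) := Nat.le_ceil x
      _ ≤ (k:ℝ) := by exact_mod_cast le_trans (Nat.le_succ _) hk
  have hb := key_exp_bound hα0 hα1 hx (by norm_num : (0:ℝ) < 1) hk1 hxk
  rw [Real.norm_eq_abs, Real.norm_eq_abs, abs_of_nonneg (prod_nonneg' hα0 hx k),
    abs_of_nonneg (Real.exp_nonneg _), one_mul]
  exact hb

private lemma head_bound {α x : ℝ} (hα0 : 0 < α) (hx : 1 ≤ x) (K : ℕ) :
    ∑ k ∈ Finset.range (K + 1), (∏ m ∈ Finset.range (k + 1), (1 - 1 / (2 * (x + m) ^ α)))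
      ≤ 2 * (x + K) ^ α := by
  set q : ℝ := 1 / (2 * (x + K) ^ α) with hq
  obtain ⟨hq0, hq2⟩ := pm_bounds hα0 hx K
  have h1 : ∀ k ∈ Finset.range (K + 1),
      (∏ m ∈ Finset.range (k + 1), (1 - 1 / (2 * (x + m) ^ α))) ≤ (1 - q) ^ k := by
    intro k hk
    have hkK : k ≤ K := Nat.lt_succ_iff.mp (Finset.mem_range.mp hk)
    calc ∏ m ∈ Finset.range (k + 1), (1 - 1 / (2 * (x + m) ^ α))
        ≤ (1 - q) ^ (k + 1) := prod_le_pow hα0 hx k K hkK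
      _ ≤ (1 - q) ^ k := by
          apply pow_le_pow_of_le_one (by linarith) (by linarith) (Nat.le_succ k)
  have h2 : ∑ k ∈ Finset.range (K + 1),
      (∏ m ∈ Finset.range (k + 1), (1 - 1 / (2 * (x + m) ^ α)))
      ≤ ∑ k ∈ Finset.range (K + 1), (1 - q) ^ k := Finset.sum_le_sum h1
  have hgeom : Summable fun k : ℕ => (1 - q) ^ k :=
    summable_geometric_of_lt_one (by linarith) (by linarith)
  have h3 : ∑ k ∈ Finset.range (K + 1), (1 - q) ^ k ≤ ∑' k : ℕ, (1 - q) ^ k :=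
    Summable.sum_le_tsum _ (fun k _ => pow_nonneg (by linarith) k) hgeom
  have h4 : ∑' k : ℕ, (1 - q) ^ k = (1 - (1 - q))⁻¹ :=
    tsum_geometric_of_lt_one (by linarith) (by linarith)
  have h5 : (1 - (1 - q))⁻¹ = 2 * (x + K) ^ α := by
    rw [hq]
    rw [show (1 : ℝ) - (1 - 1 / (2 * (x + (K:ℝ)) ^ α)) = 1 / (2 * (x + (K:ℝ)) ^ α) by ring]
    rw [one_div, inv_inv]
  linarith

private lemma lower_bound {α x : ℝ} (hα0 : 0 < α) (hα1 : α < 1) (hx : 1 ≤ x) :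
    2 * x ^ α - 1 ≤ ∑' k : ℕ, ∏ m ∈ Finset.range (k + 1), (1 - 1 / (2 * (x + m) ^ α)) := by
  set q : ℝ := 1 / (2 * x ^ α) with hq
  have hq' : q = 1 / (2 * (x + (0:ℕ)) ^ α) := by rw [hq, Nat.cast_zero, add_zero]
  obtain ⟨hq0, hq2⟩ : 0 < q ∧ q ≤ 1/2 := by rw [hq']; exact pm_bounds hα0 hx 0
  have hgeom : Summable fun k : ℕ => (1 - q) ^ (k + 1) := by
    have := (summable_geometric_of_lt_one (r := 1 - q) (by linarith) (by linarith)).mul_left (1 - q)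
    apply this.congr
    intro k
    rw [pow_succ]
    ring
  have hle : ∀ k : ℕ, (1 - q) ^ (k + 1)
      ≤ ∏ m ∈ Finset.range (k + 1), (1 - 1 / (2 * (x + m) ^ α)) := by
    intro k
    calc (1 - q) ^ (k + 1) = ∏ _m ∈ Finset.range (k + 1), (1 - q) := by
          rw [Finset.prod_const, Finset.card_range]
      _ ≤ ∏ m ∈ Finset.range (k + 1), (1 - 1 / (2 * (x + m) ^ α)) := by
          apply Finset.prod_le_prod
          · intro m _; linarith
          · intro m _
            have := pm_mono hα0 hx (Nat.zero_le m)
            rw [← hq'] at this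
            linarith
  have h1 : ∑' k : ℕ, (1 - q) ^ (k + 1)
      ≤ ∑' k : ℕ, ∏ m ∈ Finset.range (k + 1), (1 - 1 / (2 * (x + m) ^ α)) :=
    Summable.tsum_le_tsum hle hgeom (summable_prod hα0 hα1 hx)
  have h2 : ∑' k : ℕ, (1 - q) ^ (k + 1) = 2 * x ^ α - 1 := by
    have e : ∀ k : ℕ, (1 - q) ^ (k + 1) = (1 - q) * (1 - q) ^ k := by
      intro k; rw [pow_succ]; ring
    rw [tsum_congr e, tsum_mul_left,
      tsum_geometric_of_lt_one (by linarith) (by linarith)]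
    have hxα : (0:ℝ) < x ^ α := Real.rpow_pos_of_pos (by linarith) α
    rw [show (1 : ℝ) - (1 - q) = q by ring, hq]
    field_simp
  rw [h2] at h1
  linarith

set_option maxHeartbeats 1000000 in
theorem stmt2 (α : ℝ) (hα0 : 0 < α) (hα1 : α < 1)
    (S : ℝ → ℝ)
    (hS : ∀ x : ℝ, S x = ∑' k : ℕ, ∏ m ∈ Finset.range (k + 1), (1 - 1 / (2 * (x + m) ^ α))) :
    (∀ x : ℝ, 1 ≤ x →
      Summable (fun k : ℕ => ∏ m ∈ Finset.range (k + 1), (1 - 1 / (2 * (x + m) ^ α)))) ∧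
    Tendsto (fun x : ℝ => x ^ (-α) * S x) atTop (nhds 2) := by
  refine ⟨fun x hx => summable_prod hα0 hα1 hx, ?_⟩
  rw [Metric.tendsto_nhds]
  intro ε hε
  set δ : ℝ := min (ε / 8) 1 with hδdef
  have hδ0 : 0 < δ := lt_min (by linarith) one_pos
  have hδ1 : δ ≤ 1 := min_le_right _ _
  have hδε : δ ≤ ε / 8 := min_le_left _ _
  -- the dominating summable sequence for the tail
  set c₂ : ℝ := 1 / (2 * (1 / δ + 1)) with hc₂
  have hc₂0 : 0 < c₂ := by positivity
  set g : ℕ → ℝ := fun k => Real.exp (-(c₂ * (k : ℝ) ^ (1 - α))) with hg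
  have hgsum : Summable g := expSummable hc₂0 (by linarith)
  -- tail of g tends to 0
  have htail0 : Tendsto (fun i : ℕ => ∑' k : ℕ, g (k + i)) atTop (nhds 0) :=
    tendsto_sum_nat_add g
  have hKtend : Tendsto (fun x : ℝ => ⌈δ * x⌉₊ + 1) atTop atTop := by
    have h1 : Tendsto (fun x : ℝ => δ * x) atTop atTop :=
      Tendsto.const_mul_atTop hδ0 tendsto_id
    have h2 : Tendsto (fun x : ℝ => ⌈δ * x⌉₊) atTop atTop :=
      (tendsto_nat_ceil_atTop (α := ℝ)).comp h1
    exact (tendsto_add_atTop_nat 1).comp h2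
  have htailx : Tendsto (fun x : ℝ => ∑' k : ℕ, g (k + (⌈δ * x⌉₊ + 1))) atTop (nhds 0) :=
    htail0.comp hKtend
  have hev1 : ∀ᶠ x : ℝ in atTop, ∑' k : ℕ, g (k + (⌈δ * x⌉₊ + 1)) < ε / 4 := by
    exact htailx.eventually_lt_const (by linarith)
  have hev2 : ∀ᶠ x : ℝ in atTop, x ^ (-α) < ε / 4 :=
    (tendsto_rpow_neg_atTop hα0).eventually_lt_const (by linarith)
  filter_upwards [hev1, hev2, eventually_ge_atTop (1 : ℝ),
    eventually_ge_atTop (2 / δ)] with x htail hxe hx hx2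
  rw [div_le_iff₀ hδ0] at hx2
  -- basic facts
  have hxpos : (0:ℝ) < x := by linarith
  have hxα : (0:ℝ) < x ^ α := Real.rpow_pos_of_pos hxpos α
  have hxnα : (0:ℝ) < x ^ (-α) := Real.rpow_pos_of_pos hxpos (-α)
  have hxmul : x ^ (-α) * x ^ α = 1 := by
    rw [← Real.rpow_add hxpos]; simp
  have hxnα1 : x ^ (-α) ≤ 1 := by
    rw [Real.rpow_neg hxpos.le]
    have : (1:ℝ) ≤ x ^ α := Real.one_le_rpow hx hα0.le
    exact inv_le_one_of_one_le₀ this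
  obtain ⟨K, hK⟩ : ∃ K : ℕ, K = ⌈δ * x⌉₊ := ⟨_, rfl⟩
  rw [← hK] at htail
  have hsum := summable_prod hα0 hα1 hx
  -- split S x
  have hsplit : S x = (∑ k ∈ Finset.range (K + 1),
        ∏ m ∈ Finset.range (k + 1), (1 - 1 / (2 * (x + m) ^ α)))
      + ∑' k : ℕ, ∏ m ∈ Finset.range ((k + (K + 1)) + 1), (1 - 1 / (2 * (x + m) ^ α)) := by
    rw [hS x, ← Summable.sum_add_tsum_nat_add (K + 1) hsum]
  -- head bound
  have hhead : (∑ k ∈ Finset.range (K + 1),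
      ∏ m ∈ Finset.range (k + 1), (1 - 1 / (2 * (x + m) ^ α))) ≤ (2 + ε / 2) * x ^ α := by
    have h1 := head_bound hα0 hx K
    have hKle : (K : ℝ) ≤ δ * x + 1 := by
      rw [hK]
      exact_mod_cast (Nat.ceil_lt_add_one (by positivity : (0:ℝ) ≤ δ * x)).le
    have hδx : (1:ℝ) ≤ δ * x / 2 := by nlinarith
    have h2 : x + (K:ℝ) ≤ (1 + 2 * δ) * x := by nlinarith
    have h3 : (x + (K:ℝ)) ^ α ≤ ((1 + 2*δ) * x) ^ α := by
      apply Real.rpow_le_rpow (by positivity) h2 hα0.le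
    have h4 : ((1 + 2*δ) * x) ^ α = (1 + 2*δ) ^ α * x ^ α :=
      Real.mul_rpow (by linarith) hxpos.le
    have h5 : (1 + 2*δ) ^ α ≤ 1 + 2*δ := by
      calc (1 + 2*δ) ^ α ≤ (1 + 2*δ) ^ (1:ℝ) :=
            Real.rpow_le_rpow_of_exponent_le (by linarith) (by linarith)
        _ = 1 + 2*δ := Real.rpow_one _
    have h6 : (x + (K:ℝ)) ^ α ≤ (1 + 2*δ) * x ^ α := by
      rw [h4] at h3
      calc (x + (K:ℝ)) ^ α ≤ (1 + 2*δ) ^ α * x ^ α := h3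
        _ ≤ (1 + 2*δ) * x ^ α := mul_le_mul_of_nonneg_right h5 hxα.le
    calc (∑ k ∈ Finset.range (K + 1),
        ∏ m ∈ Finset.range (k + 1), (1 - 1 / (2 * (x + m) ^ α)))
        ≤ 2 * (x + K) ^ α := h1
      _ ≤ 2 * ((1 + 2*δ) * x ^ α) := by linarith
      _ ≤ (2 + ε / 2) * x ^ α := by nlinarith
  -- tail bound
  have htailb : (∑' k : ℕ, ∏ m ∈ Finset.range ((k + (K + 1)) + 1), (1 - 1 / (2 * (x + m) ^ α)))
      ≤ ∑' k : ℕ, g (k + (K + 1)) := by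
    have hs1 : Summable (fun k : ℕ =>
        ∏ m ∈ Finset.range ((k + (K + 1)) + 1), (1 - 1 / (2 * (x + m) ^ α))) :=
      (summable_nat_add_iff (f := fun k : ℕ =>
        ∏ m ∈ Finset.range (k + 1), (1 - 1 / (2 * (x + m) ^ α))) (K+1)).mpr hsum
    have hs2 : Summable (fun k : ℕ => g (k + (K + 1))) :=
      (summable_nat_add_iff (f := g) (K+1)).mpr hgsum
    refine Summable.tsum_le_tsum (fun k => ?_) hs1 hs2
    have hk1 : 1 ≤ k + (K + 1) := by omega
    have hxk : x ≤ (1/δ) * ((k + (K+1) : ℕ) : ℝ) := by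
      have h1 : δ * x ≤ (K : ℝ) := by rw [hK]; exact Nat.le_ceil _
      have h2 : (K : ℝ) ≤ ((k + (K+1) : ℕ) : ℝ) := by push_cast; linarith [Nat.cast_nonneg (α := ℝ) k]
      calc x = (1/δ) * (δ * x) := by field_simp
        _ ≤ (1/δ) * ((k + (K+1) : ℕ) : ℝ) := by
            apply mul_le_mul_of_nonneg_left (h1.trans h2) (by positivity)
    exact key_exp_bound hα0 hα1 hx (by positivity) hk1 hxk
  have htailg : ∑' k : ℕ, g (k + (K + 1)) < ε / 4 := htail
  have htailnn : 0 ≤ ∑' k : ℕ, ∏ m ∈ Finset.range ((k + (K + 1)) + 1), (1 - 1 / (2 * (x + m) ^ α)) :=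
    tsum_nonneg (fun k => prod_nonneg' hα0 hx _)
  -- upper bound on x^(-α) * S x
  have hupper : x ^ (-α) * S x ≤ 2 + 3 * ε / 4 := by
    have hS' : S x ≤ (2 + ε / 2) * x ^ α + ε / 4 := by
      rw [hsplit]
      have := htailb.trans htailg.le
      linarith
    have hSnn : 0 ≤ (2 + ε / 2) * x ^ α + ε / 4 := by positivity
    calc x ^ (-α) * S x ≤ x ^ (-α) * ((2 + ε / 2) * x ^ α + ε / 4) :=
          mul_le_mul_of_nonneg_left hS' hxnα.le
      _ = (2 + ε / 2) * (x ^ (-α) * x ^ α) + x ^ (-α) * (ε / 4) := by ring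
      _ ≤ (2 + ε / 2) * 1 + 1 * (ε / 4) := by
          rw [hxmul]
          have : x ^ (-α) * (ε / 4) ≤ 1 * (ε / 4) :=
            mul_le_mul_of_nonneg_right hxnα1 (by linarith)
          linarith
      _ = 2 + 3 * ε / 4 := by ring
  -- lower bound
  have hlower : 2 - ε / 4 ≤ x ^ (-α) * S x := by
    have h1 := lower_bound hα0 hα1 hx
    rw [← hS x] at h1
    have h2 : x ^ (-α) * (2 * x ^ α - 1) ≤ x ^ (-α) * S x :=
      mul_le_mul_of_nonneg_left h1 hxnα.le
    have h3 : x ^ (-α) * (2 * x ^ α - 1) = 2 - x ^ (-α) := by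
      have := hxmul
      nlinarith [hxmul]
    rw [h3] at h2
    linarith
  rw [Real.dist_eq, abs_lt]
  constructor <;> linarith
end

section
/- Let 0 < α < 1, c > 0, and let (u_i)_{i≥0} be a sequence of reals with u_0 ≥ 1 satisfying u_{i+1} = u_i + 2 u_i^α + c for all i. Then u_i / i^{1/(1-α)} → (2(1-α))^{1/(1-α)} as i → ∞. -/
open Real Filter

theorem stmt4 (α c : ℝ) (hα0 : 0 < α) (hα1 : α < 1) (hc : 0 < c)
    (u : ℕ → ℝ) (hu0 : 1 ≤ u 0)
    (hrec : ∀ i : ℕ, u (i + 1) = u i + 2 * u i ^ α + c) :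
    Tendsto (fun i : ℕ => u i / (i : ℝ) ^ (1 / (1 - α))) atTop
      (nhds ((2 * (1 - α)) ^ (1 / (1 - α)))) := by
  set β : ℝ := 1 - α with hβ
  have hβ0 : 0 < β := by simp [hβ]; linarith
  have hβne : β ≠ 0 := hβ0.ne'
  -- u i ≥ 1 for all i
  have hu1 : ∀ i, 1 ≤ u i := by
    intro i
    induction i with
    | zero => exact hu0
    | succ n ih =>
      have h1 : (0:ℝ) ≤ u n ^ α := rpow_nonneg (by linarith) α
      rw [hrec n]; linarith
  have hupos : ∀ i, 0 < u i := fun i => lt_of_lt_of_le one_pos (hu1 i)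
  -- u tends to infinity
  have hgrow : ∀ i, 1 + (2 + c) * i ≤ u i := by
    intro i
    induction i with
    | zero => simpa using hu0
    | succ n ih =>
      have h1 : (1:ℝ) ≤ u n ^ α := Real.one_le_rpow (hu1 n) hα0.le
      rw [hrec n]
      push_cast
      nlinarith
  have huinf : Tendsto u atTop atTop := by
    apply tendsto_atTop_mono hgrow
    apply tendsto_atTop_add_const_left
    exact (tendsto_natCast_atTop_atTop (R := ℝ)).const_mul_atTop (by linarith)
  -- the relative increment ε
  set ε : ℕ → ℝ := fun i => 2 * u i ^ (α - 1) + c / u i with hε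
  have hεpos : ∀ i, 0 < ε i := by
    intro i
    have h1 : (0:ℝ) < u i ^ (α - 1) := rpow_pos_of_pos (hupos i) _
    have h2 : (0:ℝ) < c / u i := div_pos hc (hupos i)
    simp only [hε]; positivity
  have hεto : Tendsto ε atTop (nhds 0) := by
    have h1 : Tendsto (fun i => 2 * u i ^ (α - 1)) atTop (nhds (2 * 0)) := by
      apply Tendsto.const_mul
      have := (tendsto_rpow_neg_atTop hβ0).comp huinf
      simpa [hβ, Function.comp_def] using this
    have h2 : Tendsto (fun i => c / u i) atTop (nhds 0) :=
      tendsto_const_nhds.div_atTop huinf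
    simpa using h1.add h2
  have hfact : ∀ i, u (i + 1) = u i * (1 + ε i) := by
    intro i
    have hne : u i ≠ 0 := (hupos i).ne'
    have h1 : u i * u i ^ (α - 1) = u i ^ α := by
      nth_rewrite 1 [← Real.rpow_one (u i)]
      rw [← Real.rpow_add (hupos i)]
      ring_nf
    have h2 : u i * (c / u i) = c := by field_simp
    have h3 : u i * (1 + ε i) = u i + 2 * (u i * u i ^ (α - 1)) + u i * (c / u i) := by
      simp only [hε]; ring
    rw [hrec i, h3, h1, h2]
  -- v i = u i ^ β; show v (i+1) - v i → 2β
  set v : ℕ → ℝ := fun i => u i ^ β with hv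
  have hdiff : ∀ i, v (i + 1) - v i = (2 + c * u i ^ (-α)) * (((1 + ε i) ^ β - 1) / ε i) := by
    intro i
    have hεne : ε i ≠ 0 := (hεpos i).ne'
    have h1 : v (i + 1) = u i ^ β * (1 + ε i) ^ β := by
      rw [hv]; simp only []
      rw [hfact i, Real.mul_rpow (hupos i).le (by nlinarith [hεpos i])]
    have h2 : u i ^ β * ε i = 2 + c * u i ^ (-α) := by
      rw [hε]
      have e1 : u i ^ β * u i ^ (α - 1) = 1 := by
        rw [← Real.rpow_add (hupos i)]
        have : β + (α - 1) = 0 := by rw [hβ]; ring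
        rw [this, Real.rpow_zero]
      have e2 : u i ^ β / u i = u i ^ (-α) := by
        nth_rewrite 2 [← Real.rpow_one (u i)]
        rw [← Real.rpow_sub (hupos i)]
        congr 1
        rw [hβ]; ring
      calc u i ^ β * (2 * u i ^ (α - 1) + c / u i)
          = 2 * (u i ^ β * u i ^ (α - 1)) + c * (u i ^ β / u i) := by ring
        _ = 2 + c * u i ^ (-α) := by rw [e1, e2]; ring
    rw [h1]
    field_simp
    rw [← h2]
    ring
  have hcoef : Tendsto (fun i => 2 + c * u i ^ (-α)) atTop (nhds 2) := by
    have h1 : Tendsto (fun i => u i ^ (-α)) atTop (nhds 0) :=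
      (tendsto_rpow_neg_atTop hα0).comp huinf
    have := (tendsto_const_nhds (x := (2:ℝ)) (f := atTop)).add ((tendsto_const_nhds (x := c) (f := atTop)).mul h1)
    simpa using this
  have hslope : Tendsto (fun i => ((1 + ε i) ^ β - 1) / ε i) atTop (nhds β) := by
    have hd : HasDerivAt (fun x : ℝ => x ^ β) β 1 := by
      have := Real.hasDerivAt_rpow_const (x := (1:ℝ)) (p := β) (Or.inl one_ne_zero)
      simpa using this
    have hs := hasDerivAt_iff_tendsto_slope.mp hd
    have hto : Tendsto (fun i => 1 + ε i) atTop (nhdsWithin 1 {(1:ℝ)}ᶜ) := by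
      rw [tendsto_nhdsWithin_iff]
      constructor
      · simpa using tendsto_const_nhds.add hεto
      · filter_upwards with i
        simp only [Set.mem_compl_iff, Set.mem_singleton_iff]
        nlinarith [hεpos i]
    have := hs.comp hto
    have heq : (fun i => slope (fun x : ℝ => x ^ β) 1 (1 + ε i)) =
        fun i => ((1 + ε i) ^ β - 1) / ε i := by
      funext i
      rw [slope_def_field]
      simp [div_eq_div_iff]
    rw [Function.comp_def, heq] at this
    simpa using this
  have hdiffto : Tendsto (fun i => v (i + 1) - v i) atTop (nhds (2 * β)) := by
    have := hcoef.mul hslope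
    apply Tendsto.congr (fun i => (hdiff i).symm)
    exact this
  -- Cesaro / Stolz
  have hcesaro := hdiffto.cesaro
  have hsum : ∀ n : ℕ, ∑ i ∈ Finset.range n, (v (i + 1) - v i) = v n - v 0 :=
    fun n => Finset.sum_range_sub v n
  have hvn : Tendsto (fun n : ℕ => v n / n) atTop (nhds (2 * β)) := by
    have h1 : Tendsto (fun n : ℕ => (n : ℝ)⁻¹ * (v n - v 0)) atTop (nhds (2 * β)) := by
      apply hcesaro.congr
      intro n
      rw [hsum n]
    have h2 : Tendsto (fun n : ℕ => v 0 / n) atTop (nhds 0) :=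
      tendsto_const_div_atTop_nhds_zero_nat (v 0)
    have := h1.add h2
    rw [add_zero] at this
    apply this.congr
    intro n
    rw [div_eq_mul_inv, div_eq_mul_inv]
    ring
  -- conclude
  have hfinal := hvn.rpow_const (p := 1 / β) (Or.inr (one_div_pos.mpr hβ0).le)
  apply hfinal.congr'
  filter_upwards [eventually_gt_atTop 0] with n hn
  have hnpos : (0:ℝ) < n := by exact_mod_cast hn
  rw [Real.div_rpow (le_of_lt (show (0:ℝ) < v n from Real.rpow_pos_of_pos (hupos n) β)) hnpos.le]
  congr 1
  rw [hv]
  rw [← Real.rpow_mul (hupos n).le, mul_one_div, div_self hβne, Real.rpow_one]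
end

section
/- Let 0 < α < 1 and real a > 0. If x_n, y_n are sequences with x_n ≥ 1 and x_n ≤ n^{1/(2(1-α)) + ε} for some ε < 1/(2α)·(1/2 − αε'), and set L_n = ⌈a n^{1/(2(1-α))}⌉. Then ∏_{m = x_n + L_n/2}^{x_n + L_n} (1 − m^{-α}/2) ≤ exp(−(1/(2(1-α)))((x_n + L_n)^{1-α} − (x_n + L_n/2)^{1-α})), and this bound tends to 0 as n → ∞. -/
open Real Finset Filter

/-- Tangent-line bound for concave `rpow`: for `0 ≤ p ≤ 1`, `x > 0`, `y ≥ 0`,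
`y ^ p ≤ x ^ p + p * x ^ (p - 1) * (y - x)`. -/
lemma tangent_rpow {p : ℝ} (hp0 : 0 ≤ p) (hp1 : p ≤ 1) {x y : ℝ} (hx : 0 < x) (hy : 0 ≤ y) :
    y ^ p ≤ x ^ p + p * x ^ (p - 1) * (y - x) := by
  have hu : (-1 : ℝ) ≤ y / x - 1 := by
    have : 0 ≤ y / x := div_nonneg hy hx.le
    linarith
  have hB := rpow_one_add_le_one_add_mul_self hu hp0 hp1
  have h1 : (1 : ℝ) + (y / x - 1) = y / x := by ring
  rw [h1, Real.div_rpow hy hx.le] at hB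
  have hxp : (0 : ℝ) < x ^ p := Real.rpow_pos_of_pos hx p
  have hB' : y ^ p ≤ x ^ p * (1 + p * (y / x - 1)) := by
    calc y ^ p = x ^ p * (y ^ p / x ^ p) := by field_simp
    _ ≤ x ^ p * (1 + p * (y / x - 1)) := by
        exact mul_le_mul_of_nonneg_left hB hxp.le
  have hsub : x ^ (p - 1) = x ^ p / x := Real.rpow_sub_one hx.ne' p
  rw [hsub]
  calc y ^ p ≤ x ^ p * (1 + p * (y / x - 1)) := hB'
    _ = x ^ p + p * (x ^ p / x) * (y - x) := by field_simp

lemma tele_sum (f : ℕ → ℝ) (S T : ℕ) (h : S ≤ T) :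
    ∑ m ∈ Finset.Icc S T, (f (m + 1) - f m) = f (T + 1) - f S := by
  induction T, h using Nat.le_induction with
  | base => simp
  | succ T hST ih =>
      rw [Finset.sum_Icc_succ_top (by omega), ih]
      ring

set_option maxHeartbeats 1000000 in
theorem stmt16 (α a ε : ℝ) (hα0 : 0 < α) (hα1 : α < 1) (ha : 0 < a)
    (hε0 : 0 < ε) (hε : α * ε < 1 / 2)
    (x L : ℕ → ℕ) (hx1 : ∀ n, 1 ≤ x n)
    (hx : ∀ n : ℕ, (x n : ℝ) ≤ (n : ℝ) ^ (1 / (2 * (1 - α)) + ε))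
    (hL : ∀ n : ℕ, L n = ⌈a * (n : ℝ) ^ (1 / (2 * (1 - α)))⌉₊) :
    (∀ n : ℕ,
      ∏ m ∈ Finset.Icc (x n + L n / 2) (x n + L n), (1 - (m : ℝ) ^ (-α) / 2) ≤
        Real.exp (-(1 / (2 * (1 - α))) *
          (((x n + L n : ℕ) : ℝ) ^ (1 - α) - ((x n + L n / 2 : ℕ) : ℝ) ^ (1 - α)))) ∧
    Tendsto (fun n : ℕ =>
      Real.exp (-(1 / (2 * (1 - α))) *
        (((x n + L n : ℕ) : ℝ) ^ (1 - α) - ((x n + L n / 2 : ℕ) : ℝ) ^ (1 - α))))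
      atTop (nhds 0) := by
  have h1α : (0 : ℝ) < 1 - α := by linarith
  have hp0 : (0 : ℝ) ≤ 1 - α := h1α.le
  have hp1 : (1 : ℝ) - α ≤ 1 := by linarith
  set β : ℝ := 1 / (2 * (1 - α)) with hβ
  have hβpos : 0 < β := by positivity
  constructor
  · intro n
    set S := x n + L n / 2 with hSdef
    set T := x n + L n with hTdef
    have hST : S ≤ T := by
      have := Nat.div_le_self (L n) 2; omega
    have hS1 : 1 ≤ S := le_trans (hx1 n) (Nat.le_add_right _ _)
    have hfac0 : ∀ m ∈ Finset.Icc S T, (0 : ℝ) ≤ 1 - (m : ℝ) ^ (-α) / 2 := by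
      intro m hm
      have hm1 : 1 ≤ m := le_trans hS1 (Finset.mem_Icc.mp hm).1
      have : (m : ℝ) ^ (-α) ≤ 1 :=
        Real.rpow_le_one_of_one_le_of_nonpos (by exact_mod_cast hm1) (by linarith)
      linarith
    have hfac : ∀ m ∈ Finset.Icc S T, (1 - (m : ℝ) ^ (-α) / 2) ≤
        Real.exp (-((m : ℝ) ^ (-α) / 2)) := by
      intro m _
      have := Real.add_one_le_exp (-((m : ℝ) ^ (-α) / 2))
      linarith
    have hsum : ((T : ℝ)) ^ (1 - α) - ((S : ℝ)) ^ (1 - α) ≤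
        (1 - α) * ∑ m ∈ Finset.Icc S T, (m : ℝ) ^ (-α) := by
      have hkey : ∀ m ∈ Finset.Icc S T,
          ((m + 1 : ℕ) : ℝ) ^ (1 - α) - ((m : ℕ) : ℝ) ^ (1 - α) ≤ (1 - α) * (m : ℝ) ^ (-α) := by
        intro m hm
        have hm1 : 1 ≤ m := le_trans hS1 (Finset.mem_Icc.mp hm).1
        have hmpos : (0 : ℝ) < (m : ℝ) := by exact_mod_cast hm1
        have := tangent_rpow hp0 hp1 (x := (m : ℝ)) (y := (m : ℝ) + 1) hmpos
          (by positivity)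
        have he : (1 : ℝ) - α - 1 = -α := by ring
        rw [he] at this
        push_cast
        nlinarith [this]
      have htel := tele_sum (fun m => ((m : ℕ) : ℝ) ^ (1 - α)) S T hST
      have h2 : ((T + 1 : ℕ) : ℝ) ^ (1 - α) - ((S : ℕ) : ℝ) ^ (1 - α) ≤
          ∑ m ∈ Finset.Icc S T, (1 - α) * (m : ℝ) ^ (-α) := by
        rw [← htel]
        exact Finset.sum_le_sum hkey
      have h3 : ((T : ℕ) : ℝ) ^ (1 - α) ≤ ((T + 1 : ℕ) : ℝ) ^ (1 - α) := by
        apply Real.rpow_le_rpow (by positivity) (by push_cast; linarith) hp0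
      calc ((T : ℝ)) ^ (1 - α) - ((S : ℝ)) ^ (1 - α)
          ≤ ((T + 1 : ℕ) : ℝ) ^ (1 - α) - ((S : ℕ) : ℝ) ^ (1 - α) := by
            have := h3; push_cast at this ⊢; linarith
        _ ≤ ∑ m ∈ Finset.Icc S T, (1 - α) * (m : ℝ) ^ (-α) := h2
        _ = (1 - α) * ∑ m ∈ Finset.Icc S T, (m : ℝ) ^ (-α) := by rw [Finset.mul_sum]
    calc ∏ m ∈ Finset.Icc S T, (1 - (m : ℝ) ^ (-α) / 2)
        ≤ ∏ m ∈ Finset.Icc S T, Real.exp (-((m : ℝ) ^ (-α) / 2)) :=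
          Finset.prod_le_prod hfac0 hfac
      _ = Real.exp (∑ m ∈ Finset.Icc S T, -((m : ℝ) ^ (-α) / 2)) := (Real.exp_sum _ _).symm
      _ ≤ Real.exp (-β * (((T : ℕ) : ℝ) ^ (1 - α) - ((S : ℕ) : ℝ) ^ (1 - α))) := by
          apply Real.exp_le_exp.mpr
          have hsum' : ∑ m ∈ Finset.Icc S T, -((m : ℝ) ^ (-α) / 2) =
              -((∑ m ∈ Finset.Icc S T, (m : ℝ) ^ (-α)) / 2) := by
            rw [Finset.sum_div, ← Finset.sum_neg_distrib]
          rw [hsum']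
          have hβval : β * (1 - α) = 1 / 2 := by
            rw [hβ]; field_simp
          have h5 := mul_le_mul_of_nonneg_left hsum hβpos.le
          have h6 : β * ((1 - α) * ∑ m ∈ Finset.Icc S T, (m : ℝ) ^ (-α)) =
              (∑ m ∈ Finset.Icc S T, (m : ℝ) ^ (-α)) / 2 := by
            rw [← mul_assoc, hβval]; ring
          linarith
  · -- Tendsto part
    have hδ : (0 : ℝ) < 1 / 2 - α * ε := by linarith
    set δ : ℝ := 1 / 2 - α * ε with hδdef
    set C : ℝ := (1 - α) * ((a + 2) ^ (-α)) * (a / 2) with hC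
    have hCpos : 0 < C := by
      have : (0 : ℝ) < (a + 2) ^ (-α) := Real.rpow_pos_of_pos (by linarith) _
      positivity
    -- lower bound on the difference, eventually
    have hlow : ∀ᶠ n : ℕ in atTop, C * (n : ℝ) ^ δ ≤
        (((x n + L n : ℕ) : ℝ) ^ (1 - α) - ((x n + L n / 2 : ℕ) : ℝ) ^ (1 - α)) := by
      filter_upwards [eventually_ge_atTop 1] with n hn1
      have hn1R : (1 : ℝ) ≤ (n : ℝ) := by exact_mod_cast hn1
      have hnpos : (0 : ℝ) < (n : ℝ) := by linarith
      set S := x n + L n / 2 with hSdef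
      set T := x n + L n with hTdef
      have hST : S ≤ T := by have := Nat.div_le_self (L n) 2; omega
      have hS1 : 1 ≤ S := le_trans (hx1 n) (Nat.le_add_right _ _)
      have hTpos : (0 : ℝ) < (T : ℝ) := by
        have : 1 ≤ T := le_trans hS1 hST; exact_mod_cast this
      -- L n ≥ a n^β
      have hLlow : a * (n : ℝ) ^ β ≤ (L n : ℝ) := by rw [hL n]; exact Nat.le_ceil _
      -- T - S ≥ L/2 ≥ a n^β / 2
      have hdiff : a * (n : ℝ) ^ β / 2 ≤ (T : ℝ) - (S : ℝ) := by
        have h1 : ((L n / 2 : ℕ) : ℝ) ≤ (L n : ℝ) / 2 := by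
          have := Nat.cast_div_le (m := L n) (n := 2) (α := ℝ)
          simpa using this
        have h2 : (T : ℝ) - (S : ℝ) = (L n : ℝ) - ((L n / 2 : ℕ) : ℝ) := by
          rw [hSdef, hTdef]; push_cast; ring
        rw [h2]; linarith
      -- T ≤ (a+2) n^(β+ε)
      have hmono : (n : ℝ) ^ β ≤ (n : ℝ) ^ (β + ε) :=
        Real.rpow_le_rpow_of_exponent_le hn1R (by linarith)
      have hone : (1 : ℝ) ≤ (n : ℝ) ^ (β + ε) :=
        Real.one_le_rpow hn1R (by positivity)
      have hnβ1 : (1:ℝ) ≤ (n : ℝ) ^ β := Real.one_le_rpow hn1R hβpos.le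
      have hTup : (T : ℝ) ≤ (a + 2) * (n : ℝ) ^ (β + ε) := by
        have hxn := hx n
        have hLup : (L n : ℝ) ≤ a * (n : ℝ) ^ β + 1 := by
          rw [hL n]
          have := Nat.ceil_lt_add_one (a := a * (n : ℝ) ^ β) (by positivity)
          linarith
        have : (T : ℝ) = (x n : ℝ) + (L n : ℝ) := by rw [hTdef]; push_cast; ring
        rw [this]
        have hab : a * (n : ℝ) ^ β ≤ a * (n : ℝ) ^ (β + ε) :=
          mul_le_mul_of_nonneg_left hmono ha.le
        nlinarith
      -- tangent bound: S^(1-α) ≤ T^(1-α) + (1-α) T^(-α) (S - T)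
      have htan := tangent_rpow hp0 hp1 (x := (T : ℝ)) (y := (S : ℝ)) hTpos (by positivity)
      have he : (1 : ℝ) - α - 1 = -α := by ring
      rw [he] at htan
      -- T^(-α) ≥ ((a+2) n^(β+ε))^(-α)
      have hTneg : ((a + 2) * (n : ℝ) ^ (β + ε)) ^ (-α) ≤ (T : ℝ) ^ (-α) :=
        Real.rpow_le_rpow_of_nonpos hTpos hTup (by linarith)
      have hsplit : ((a + 2) * (n : ℝ) ^ (β + ε)) ^ (-α) =
          (a + 2) ^ (-α) * (n : ℝ) ^ ((β + ε) * (-α)) := by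
        rw [Real.mul_rpow (by linarith) (by positivity), ← Real.rpow_mul hnpos.le]
      have hexp : (n : ℝ) ^ δ = (n : ℝ) ^ ((β + ε) * (-α)) * (n : ℝ) ^ β := by
        rw [← Real.rpow_add hnpos]
        congr 1
        have hβval : β * (1 - α) = 1 / 2 := by rw [hβ]; field_simp
        rw [hδdef]; linear_combination -hβval
      -- combine
      have hTnegpos : (0 : ℝ) < (n : ℝ) ^ ((β + ε) * (-α)) := Real.rpow_pos_of_pos hnpos _
      have ha2pos : (0 : ℝ) < (a + 2) ^ (-α) := Real.rpow_pos_of_pos (by linarith) _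
      have hfinal : C * (n : ℝ) ^ δ ≤ (1 - α) * (T : ℝ) ^ (-α) * ((T : ℝ) - (S : ℝ)) := by
        have hTα : (a + 2) ^ (-α) * (n : ℝ) ^ ((β + ε) * (-α)) ≤ (T : ℝ) ^ (-α) := by
          rw [← hsplit]; exact hTneg
        have hdn : (0:ℝ) ≤ a * (n : ℝ) ^ β / 2 := by positivity
        calc C * (n : ℝ) ^ δ
            = (1 - α) * ((a + 2) ^ (-α) * (n : ℝ) ^ ((β + ε) * (-α))) *
              (a * (n : ℝ) ^ β / 2) := by rw [hC, hexp]; ring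
          _ ≤ (1 - α) * (T : ℝ) ^ (-α) * ((T : ℝ) - (S : ℝ)) := by
              apply mul_le_mul
              · exact mul_le_mul_of_nonneg_left hTα h1α.le
              · exact hdiff
              · exact hdn
              · positivity
      linarith [htan, hfinal]
    -- now conclude
    have hDtop : Tendsto (fun n : ℕ =>
        (((x n + L n : ℕ) : ℝ) ^ (1 - α) - ((x n + L n / 2 : ℕ) : ℝ) ^ (1 - α)))
        atTop atTop := by
      apply tendsto_atTop_mono' atTop hlow
      have h1 : Tendsto (fun n : ℕ => (n : ℝ) ^ δ) atTop atTop :=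
        (tendsto_rpow_atTop hδ).comp tendsto_natCast_atTop_atTop
      exact h1.const_mul_atTop hCpos
    have h2 : Tendsto (fun n : ℕ => -β *
        (((x n + L n : ℕ) : ℝ) ^ (1 - α) - ((x n + L n / 2 : ℕ) : ℝ) ^ (1 - α)))
        atTop atBot := by
      have h3 := tendsto_neg_atTop_atBot.comp (hDtop.const_mul_atTop hβpos)
      exact h3.congr (fun n => by simp [Function.comp_apply, neg_mul])
    exact Real.tendsto_exp_atBot.comp h2
end
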